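/- For every regular expression α, a word w ∈ Σ* belongs to L(α) if and only if ε ∈ L(β) for some β ∈ ∂_w(α). -/

import Mathlib

open RegularExpression
open scoped Classical Computability

variable {σ : Type*}

/-- `S ⊙ β`: append `β` on the right to every element of `S`, with `S ⊙ ∅ = ∅`. -/
noncomputable def odot (S : Finset (RegularExpression σ)) (β : RegularExpression σ) :
    Finset (RegularExpression σ) :=
  if β = zero then ∅ else S.image (fun γ => comp γ β)

/-- Antimirov's partial derivative of a regular expression w.r.t. a letter. -/
noncomputable def pd (a : σ) : RegularExpression σ → Finset (RegularExpression σ)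
  | zero => ∅
  | epsilon => ∅
  | char b => if b = a then {epsilon} else ∅
  | plus P Q => pd a P ∪ pd a Q
  | comp P Q =>
      if [] ∈ P.matches' then odot (pd a P) Q ∪ pd a Q else odot (pd a P) Q
  | RegularExpression.star P => odot (pd a P) (RegularExpression.star P)

/-- Partial derivative of a finite set of regular expressions w.r.t. a letter. -/
noncomputable def pdSet (a : σ) (S : Finset (RegularExpression σ)) :
    Finset (RegularExpression σ) :=
  S.biUnion (pd a)

/-- Partial derivatives w.r.t. a word: `∂_ε(α) = {α}`, `∂_{wσ}(α) = ∂_σ(∂_w(α))`. -/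
noncomputable def pdWord (α : RegularExpression σ) (w : List σ) :
    Finset (RegularExpression σ) :=
  w.foldl (fun S a => pdSet a S) {α}

/-- The set of all partial derivatives of `α`. -/
def PD (α : RegularExpression σ) : Set (RegularExpression σ) :=
  {β | ∃ w : List σ, β ∈ pdWord α w}

/-- Alphabetic size: number of letter occurrences. -/
def alph : RegularExpression σ → ℕ
  | zero => 0
  | epsilon => 0
  | char _ => 1
  | plus P Q => alph P + alph Q
  | comp P Q => alph P + alph Q
  | RegularExpression.star P => alph P

/-- The language of a finite set of regular expressions. -/
def langOf (S : Finset (RegularExpression σ)) : Language σ :=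
  {w | ∃ β ∈ S, w ∈ β.matches'}

lemma mem_odot_iff {S : Finset (RegularExpression σ)} {β : RegularExpression σ}
    {x : List σ} :
    (∃ γ ∈ odot S β, x ∈ γ.matches') ↔
      ∃ γ ∈ S, x ∈ γ.matches' * β.matches' := by
  unfold odot
  split_ifs with h
  · subst h
    simp [matches'_zero]
  · simp only [Finset.mem_image]
    constructor
    · rintro ⟨_, ⟨γ, hγ, rfl⟩, hx⟩
      exact ⟨γ, hγ, by simpa [comp_def, matches'_mul] using hx⟩
    · rintro ⟨γ, hγ, hx⟩
      exact ⟨comp γ β, ⟨γ, hγ, rfl⟩, by simpa [comp_def, matches'_mul] using hx⟩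

lemma cons_mem_kstar_iff {l : Language σ} {a : σ} {w : List σ} :
    a :: w ∈ l∗ ↔ ∃ s t, a :: s ∈ l ∧ t ∈ l∗ ∧ w = s ++ t := by
  constructor
  · intro h
    rw [Language.mem_kstar_iff_exists_nonempty] at h
    obtain ⟨S, hx, h⟩ := h
    induction S with
    | nil => simp at hx
    | cons y S ih =>
      match y, h y (by simp) with
      | b :: s, ⟨hy, _⟩ =>
        simp only [List.flatten, List.cons_append, List.cons.injEq] at hx
        obtain ⟨rfl, rfl⟩ := hx
        exact ⟨s, S.flatten, hy, Language.join_mem_kstar (fun z hz => (h z (by simp [hz])).1), rfl⟩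
  · rintro ⟨s, t, hs, ht, rfl⟩
    have h2 : a :: s ++ t ∈ l * l∗ := Language.append_mem_mul hs ht
    rw [← Language.one_add_self_mul_kstar_eq_kstar, Language.mem_add]
    exact Or.inr (by simpa using h2)

lemma pd_correct (a : σ) (α : RegularExpression σ) (w : List σ) :
    a :: w ∈ α.matches' ↔ ∃ β ∈ pd a α, w ∈ β.matches' := by
  induction α generalizing w with
  | zero => simp [pd, matches'_zero]
  | epsilon => simp [pd, matches'_epsilon, Language.mem_one]
  | char b =>
    simp only [pd, matches'_char]
    split_ifs with h
    · subst h
      simp only [Finset.mem_singleton, matches'_epsilon, Language.mem_one]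
      constructor
      · intro hx
        have hx : b :: w = [b] := hx
        simp only [List.cons.injEq] at hx
        exact ⟨epsilon, rfl, hx.2⟩
      · rintro ⟨β, rfl, hw⟩
        have : w ∈ (1 : Language σ) := hw
        rw [Language.mem_one] at this; subst this; rfl
    · simp only [Finset.notMem_empty, false_and, exists_false, iff_false]
      intro hx
      have hx : a :: w = [b] := hx
      simp only [List.cons.injEq] at hx
      exact h hx.1.symm
  | plus P Q ihP ihQ =>
    simp only [pd, Finset.mem_union]
    show a :: w ∈ P.matches' + Q.matches' ↔ _
    rw [Language.mem_add]
    constructor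
    · rintro (h | h)
      · obtain ⟨β, hβ, hw⟩ := (ihP w).1 h; exact ⟨β, Or.inl hβ, hw⟩
      · obtain ⟨β, hβ, hw⟩ := (ihQ w).1 h; exact ⟨β, Or.inr hβ, hw⟩
    · rintro ⟨β, hβ | hβ, hw⟩
      · exact Or.inl ((ihP w).2 ⟨β, hβ, hw⟩)
      · exact Or.inr ((ihQ w).2 ⟨β, hβ, hw⟩)
  | comp P Q ihP ihQ =>
    simp only [pd]
    show a :: w ∈ P.matches' * Q.matches' ↔ _
    split_ifs with hP
    · constructor
      · intro h
        rw [Language.mem_mul] at h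
        obtain ⟨u, hu, v, hv, huv⟩ := h
        match u, huv with
        | [], huv =>
          obtain ⟨β, hβ, hw⟩ := (ihQ w).1 (by simpa using huv ▸ hv)
          exact ⟨β, Finset.mem_union_right _ hβ, hw⟩
        | b :: u, huv =>
          simp only [List.cons_append, List.cons.injEq] at huv
          obtain ⟨rfl, rfl⟩ := huv
          obtain ⟨β, hβ, hu'⟩ := (ihP u).1 hu
          obtain ⟨γ, hγ, hγx⟩ := mem_odot_iff.2 ⟨β, hβ, Language.append_mem_mul hu' hv⟩
          exact ⟨γ, Finset.mem_union_left _ hγ, hγx⟩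
      · rintro ⟨β, hβ, hw⟩
        rcases Finset.mem_union.1 hβ with hβ | hβ
        · obtain ⟨γ, hγ, hx⟩ := mem_odot_iff.1 ⟨β, hβ, hw⟩
          rw [Language.mem_mul] at hx
          obtain ⟨u, hu, v, hv, rfl⟩ := hx
          exact Language.append_mem_mul ((ihP u).2 ⟨γ, hγ, hu⟩) hv
        · have := (ihQ w).2 ⟨β, hβ, hw⟩
          simpa using Language.append_mem_mul hP this
    · constructor
      · intro h
        rw [Language.mem_mul] at h
        obtain ⟨u, hu, v, hv, huv⟩ := h
        match u, huv with
        | [], huv => exact absurd hu hP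
        | b :: u, huv =>
          simp only [List.cons_append, List.cons.injEq] at huv
          obtain ⟨rfl, rfl⟩ := huv
          obtain ⟨β, hβ, hu'⟩ := (ihP u).1 hu
          exact mem_odot_iff.2 ⟨β, hβ, Language.append_mem_mul hu' hv⟩
      · rintro ⟨β, hβ, hw⟩
        obtain ⟨γ, hγ, hx⟩ := mem_odot_iff.1 ⟨β, hβ, hw⟩
        rw [Language.mem_mul] at hx
        obtain ⟨u, hu, v, hv, rfl⟩ := hx
        exact Language.append_mem_mul ((ihP u).2 ⟨γ, hγ, hu⟩) hv
  | star P ihP =>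
    simp only [pd]
    show a :: w ∈ P.matches'∗ ↔ _
    constructor
    · intro h
      obtain ⟨s, t, hs, ht, rfl⟩ := cons_mem_kstar_iff.1 h
      obtain ⟨β, hβ, hs'⟩ := (ihP s).1 hs
      exact mem_odot_iff.2 ⟨β, hβ, by rw [matches'_star]; exact Language.append_mem_mul hs' ht⟩
    · intro h
      obtain ⟨γ, hγ, hx⟩ := mem_odot_iff.1 h
      rw [matches'_star, Language.mem_mul] at hx
      obtain ⟨u, hu, v, hv, rfl⟩ := hx
      exact cons_mem_kstar_iff.2 ⟨u, v, (ihP u).2 ⟨γ, hγ, hu⟩, hv, rfl⟩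

lemma foldl_correct (w : List σ) (S : Finset (RegularExpression σ)) :
    (∃ β ∈ S, w ∈ β.matches') ↔
      ∃ β ∈ w.foldl (fun S a => pdSet a S) S, [] ∈ β.matches' := by
  induction w generalizing S with
  | nil => simp
  | cons a w ih =>
    rw [List.foldl_cons, ← ih]
    constructor
    · rintro ⟨β, hβ, hw⟩
      obtain ⟨γ, hγ, hw'⟩ := (pd_correct a β w).1 hw
      exact ⟨γ, Finset.mem_biUnion.2 ⟨β, hβ, hγ⟩, hw'⟩
    · rintro ⟨γ, hγ, hw'⟩
      obtain ⟨β, hβ, hγ'⟩ := Finset.mem_biUnion.1 hγ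
      exact ⟨β, hβ, (pd_correct a β w).2 ⟨γ, hγ', hw'⟩⟩

/-- `w ∈ L(α)` iff some partial derivative of `α` w.r.t. `w` accepts `ε`. -/
theorem mem_matches_iff_pdWord (α : RegularExpression σ) (w : List σ) :
    w ∈ α.matches' ↔ ∃ β ∈ pdWord α w, [] ∈ β.matches' := by
  rw [pdWord, ← foldl_correct]
  simp
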